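/- For every integer i, there is an order isomorphism L_i ×ₗ ℕ ≅ L_{i+1}, where ℕ carries its usual order; that is, replacing every point of L_i by a copy of ω yields L_{i+1}. -/

import Mathlib

open Ordinal

/-- Exponent of the `j`-th term (from the right, counting from `j = 0`) of `L i`. -/
def e (i : ℤ) (j : ℕ) : ℕ := ((j : ℤ) + 1 + max i 0).toNat

/-- Coefficient of the `j`-th term (from the right, counting from `j = 0`) of `L i`. -/
def c (i : ℤ) (j : ℕ) : ℕ := ((j : ℤ) + 1 + max (-i) 0).toNat

/-- The order `L i = … + c₂·ω^{e₂} + c₁·ω^{e₁} + c₀·ω^{e₀} + ω^ω`: an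
`ω*`-indexed sum of ordinals followed on the right by a copy of `ω^ω`. -/
abbrev L (i : ℤ) : Type :=
  ((Lex (Σ j : ℕ, (Ordinal.ToType (ω ^ (e i j) * (c i j)))ᵒᵈ))ᵒᵈ) ⊕ₗ Ordinal.ToType (ω ^ ω)

section Helpers

open OrderDual

instance sumLexWFLT' {A B : Type*} [LT A] [LT B] [WellFoundedLT A] [WellFoundedLT B] :
    WellFoundedLT (A ⊕ₗ B) :=
  ⟨Sum.lex_wf IsWellFounded.wf IsWellFounded.wf⟩

noncomputable def ordIso {A B : Type} [LinearOrder A] [LinearOrder B]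
    [WellFoundedLT A] [WellFoundedLT B]
    (h : @Ordinal.type A (· < ·) isWellOrder_lt = @Ordinal.type B (· < ·) isWellOrder_lt) :
    A ≃o B :=
  OrderIso.ofRelIsoLT (Classical.choice (Ordinal.type_eq.1 h))

theorem type_prodNat (α : Ordinal.{0}) :
    @Ordinal.type (Lex (α.ToType × ℕ)) (· < ·) isWellOrder_lt = ω * α := by
  haveI h1 : IsWellOrder α.ToType (· < ·) := isWellOrder_lt
  haveI h2 : IsWellOrder ℕ (· < ·) := isWellOrder_lt
  have h : @Ordinal.type (Lex (α.ToType × ℕ)) (· < ·) isWellOrder_lt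
      = Ordinal.type (Prod.Lex ((· < ·) : α.ToType → _ → Prop) ((· < ·) : ℕ → _ → Prop)) := rfl
  rw [h, type_prod_lex, type_toType, type_nat_lt]

noncomputable def prodNatIso (α : Ordinal.{0}) : Lex (α.ToType × ℕ) ≃o (ω * α).ToType :=
  ordIso (by rw [type_prodNat, type_toType])

theorem type_sumLex (α β : Ordinal.{0}) :
    @Ordinal.type (α.ToType ⊕ₗ β.ToType) (· < ·) isWellOrder_lt = α + β := by
  haveI h1 : IsWellOrder α.ToType (· < ·) := isWellOrder_lt
  haveI h2 : IsWellOrder β.ToType (· < ·) := isWellOrder_lt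
  have h : @Ordinal.type (α.ToType ⊕ₗ β.ToType) (· < ·) isWellOrder_lt
      = Ordinal.type (Sum.Lex ((· < ·) : α.ToType → _ → Prop)
          ((· < ·) : β.ToType → _ → Prop)) := rfl
  rw [h, type_sum_lex, type_toType, type_toType]

noncomputable def sumTypeIso (α β : Ordinal.{0}) : (α.ToType ⊕ₗ β.ToType) ≃o (α + β).ToType :=
  ordIso (by rw [type_sumLex, type_toType])

noncomputable def toTypeCongr {α β : Ordinal.{0}} (h : α = β) : α.ToType ≃o β.ToType :=
  h ▸ OrderIso.refl _

section Structural
variable {A B C A' B' : Type*} [LinearOrder A] [LinearOrder B] [LinearOrder C]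
  [LinearOrder A'] [LinearOrder B']
variable {X Y : ℕ → Type*} [∀ j, LinearOrder (X j)] [∀ j, LinearOrder (Y j)]

noncomputable def distribIso : Lex ((A ⊕ₗ B) × C) ≃o (Lex (A × C) ⊕ₗ Lex (B × C)) := by
  refine StrictMono.orderIsoOfSurjective
    (fun p => Sum.elim (fun a => toLex (Sum.inl (toLex (a, (ofLex p).2))))
      (fun b => toLex (Sum.inr (toLex (b, (ofLex p).2)))) (ofLex (ofLex p).1)) ?_ ?_
  · rintro p q h
    obtain ⟨⟨x, cx⟩, rfl⟩ := toLex.surjective p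
    obtain ⟨⟨y, cy⟩, rfl⟩ := toLex.surjective q
    rw [Prod.Lex.lt_iff] at h
    obtain ⟨a | a, rfl⟩ := toLex.surjective x <;> obtain ⟨b | b, rfl⟩ := toLex.surjective y <;>
        simp only [ofLex_toLex, Sum.elim_inl, Sum.elim_inr] at h ⊢
    · rcases h with h | ⟨h1, h2⟩
      · exact Sum.Lex.inl_lt_inl_iff.2 (Prod.Lex.lt_iff |>.2
          (Or.inl (Sum.Lex.inl_lt_inl_iff.1 h)))
      · exact Sum.Lex.inl_lt_inl_iff.2 (Prod.Lex.lt_iff |>.2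
          (Or.inr ⟨Sum.inl_injective (toLex.injective h1), h2⟩))
    · exact Sum.Lex.inl_lt_inr _ _
    · rcases h with h | ⟨h1, h2⟩
      · exact absurd h Sum.Lex.not_inr_lt_inl
      · exact absurd (toLex.injective h1) (by simp)
    · rcases h with h | ⟨h1, h2⟩
      · exact Sum.Lex.inr_lt_inr_iff.2 (Prod.Lex.lt_iff |>.2
          (Or.inl (Sum.Lex.inr_lt_inr_iff.1 h)))
      · exact Sum.Lex.inr_lt_inr_iff.2 (Prod.Lex.lt_iff |>.2
          (Or.inr ⟨Sum.inr_injective (toLex.injective h1), h2⟩))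
  · rintro z
    obtain ⟨w | w, rfl⟩ := toLex.surjective z
    · obtain ⟨⟨a, cc⟩, rfl⟩ := toLex.surjective w
      exact ⟨toLex (toLex (Sum.inl a), cc), rfl⟩
    · obtain ⟨⟨b, cc⟩, rfl⟩ := toLex.surjective w
      exact ⟨toLex (toLex (Sum.inr b), cc), rfl⟩

noncomputable def sigmaProdIso :
    Lex ((Lex (Σ j : ℕ, (Y j)ᵒᵈ))ᵒᵈ × C) ≃o (Lex (Σ j : ℕ, (Lex (Y j × C))ᵒᵈ))ᵒᵈ := by
  refine StrictMono.orderIsoOfSurjective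
    (fun p => toDual (toLex ⟨(ofLex (ofDual (ofLex p).1)).1,
      toDual (toLex ((ofDual (ofLex (ofDual (ofLex p).1)).2), (ofLex p).2))⟩)) ?_ ?_
  · rintro p q h
    obtain ⟨⟨xd, cx⟩, rfl⟩ := toLex.surjective p
    obtain ⟨⟨yd, cy⟩, rfl⟩ := toLex.surjective q
    obtain ⟨x, rfl⟩ := toDual.surjective xd
    obtain ⟨y, rfl⟩ := toDual.surjective yd
    obtain ⟨⟨j, ad⟩, rfl⟩ := toLex.surjective x
    obtain ⟨⟨k, bd⟩, rfl⟩ := toLex.surjective y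
    obtain ⟨a, rfl⟩ := toDual.surjective ad
    obtain ⟨b, rfl⟩ := toDual.surjective bd
    rw [Prod.Lex.lt_iff] at h
    simp only [ofLex_toLex, ofDual_toDual, toDual_lt_toDual] at h ⊢
    rcases h with h | ⟨h1, h2⟩
    · replace h : Sigma.Lex (· < ·) (fun _ => (· < ·))
        (⟨k, toDual b⟩ : Σ j : ℕ, (Y j)ᵒᵈ) ⟨j, toDual a⟩ := h
      rcases h with ⟨_, _, hkj⟩ | ⟨_, _, hba⟩
      · exact Sigma.Lex.left _ _ hkj
      · exact Sigma.Lex.right _ _ (by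
          refine toDual_lt_toDual.2 ?_
          exact Prod.Lex.lt_iff |>.2 (Or.inl (toDual_lt_toDual.1 hba)))
    · replace h1 : (⟨j, toDual a⟩ : Σ j : ℕ, (Y j)ᵒᵈ) = ⟨k, toDual b⟩ :=
        toLex.injective (toDual.injective h1)
      obtain ⟨rfl, h1'⟩ := Sigma.mk.inj_iff.1 h1
      obtain rfl : a = b := toDual.injective (eq_of_heq h1')
      exact Sigma.Lex.right _ _ (by
        refine toDual_lt_toDual.2 ?_
        exact Prod.Lex.lt_iff |>.2 (Or.inr ⟨rfl, h2⟩))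
  · rintro z
    obtain ⟨w, rfl⟩ := toDual.surjective z
    obtain ⟨⟨j, vd⟩, rfl⟩ := toLex.surjective w
    obtain ⟨v, rfl⟩ := toDual.surjective vd
    obtain ⟨⟨a, cc⟩, rfl⟩ := toLex.surjective v
    exact ⟨toLex (toDual (toLex ⟨j, toDual a⟩), cc), rfl⟩

noncomputable def sigmaCongr (f : ∀ j, X j ≃o Y j) :
    Lex (Σ j : ℕ, X j) ≃o Lex (Σ j : ℕ, Y j) := by
  refine StrictMono.orderIsoOfSurjective
    (fun p => toLex ⟨(ofLex p).1, f _ (ofLex p).2⟩) ?_ ?_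
  · rintro p q h
    obtain ⟨⟨j, a⟩, rfl⟩ := toLex.surjective p
    obtain ⟨⟨k, b⟩, rfl⟩ := toLex.surjective q
    replace h : Sigma.Lex (· < ·) (fun _ => (· < ·)) (⟨j, a⟩ : Σ j, X j) ⟨k, b⟩ := h
    rcases h with ⟨_, _, hjk⟩ | ⟨_, _, hab⟩
    · exact Sigma.Lex.left _ _ hjk
    · exact Sigma.Lex.right _ _ ((f _).strictMono hab)
  · rintro z
    obtain ⟨⟨j, b⟩, rfl⟩ := toLex.surjective z
    exact ⟨toLex ⟨j, (f j).symm b⟩, by simp; exact (f j).apply_symm_apply b⟩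

noncomputable def sumCongr (fA : A ≃o A') (fB : B ≃o B') : (A ⊕ₗ B) ≃o (A' ⊕ₗ B') := by
  refine StrictMono.orderIsoOfSurjective
    (fun p => toLex (Sum.map fA fB (ofLex p))) ?_ ?_
  · rintro p q h
    obtain ⟨x, rfl⟩ := toLex.surjective p
    obtain ⟨y, rfl⟩ := toLex.surjective q
    replace h : Sum.Lex (· < ·) (· < ·) x y := h
    rcases h with ⟨h⟩ | ⟨h⟩ | ⟨a, b⟩
    · exact Sum.Lex.inl_lt_inl_iff.2 (fA.strictMono h)
    · exact Sum.Lex.inr_lt_inr_iff.2 (fB.strictMono h)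
    · exact Sum.Lex.inl_lt_inr _ _
  · rintro z
    obtain ⟨w | w, rfl⟩ := toLex.surjective z
    · exact ⟨toLex (Sum.inl (fA.symm w)), by simp⟩
    · exact ⟨toLex (Sum.inr (fB.symm w)), by simp⟩

def peelAux (B : Type*) [LinearOrder B] (σ : Σ j : ℕ, X j) :
    (Lex (Σ j : ℕ, X (j + 1)))ᵒᵈ ⊕ₗ ((X 0)ᵒᵈ ⊕ₗ B) :=
  match σ with
  | ⟨0, x⟩ => toLex (Sum.inr (toLex (Sum.inl (toDual x))))
  | ⟨j + 1, x⟩ => toLex (Sum.inl (toDual (toLex ⟨j, x⟩)))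

noncomputable def peelIso :
    ((Lex (Σ j : ℕ, X j))ᵒᵈ ⊕ₗ B) ≃o
      ((Lex (Σ j : ℕ, X (j + 1)))ᵒᵈ ⊕ₗ ((X 0)ᵒᵈ ⊕ₗ B)) := by
  refine StrictMono.orderIsoOfSurjective
    (fun p => Sum.elim (fun xd => peelAux B (ofLex (ofDual xd)))
      (fun b => toLex (Sum.inr (toLex (Sum.inr b)))) (ofLex p)) ?_ ?_
  · rintro p q h
    obtain ⟨u, rfl⟩ := toLex.surjective p
    obtain ⟨v, rfl⟩ := toLex.surjective q
    replace h : Sum.Lex (· < ·) (· < ·) u v := h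
    rcases h with ⟨h⟩ | ⟨h⟩ | ⟨xd, b⟩
    · rename_i xd yd
      obtain ⟨x, rfl⟩ := toDual.surjective xd
      obtain ⟨y, rfl⟩ := toDual.surjective yd
      rw [toDual_lt_toDual] at h
      obtain ⟨⟨j, a⟩, rfl⟩ := toLex.surjective x
      obtain ⟨⟨k, b⟩, rfl⟩ := toLex.surjective y
      replace h : Sigma.Lex (· < ·) (fun _ => (· < ·)) (⟨k, b⟩ : Σ j, X j) ⟨j, a⟩ := h
      simp only [ofLex_toLex, Sum.elim_inl, ofDual_toDual]
      rcases h with ⟨_, _, hkj⟩ | ⟨_, _, hba⟩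
      · match k, j, hkj with
        | 0, j + 1, _ =>
          simp only [peelAux]
          exact Sum.Lex.inl_lt_inr _ _
        | k + 1, j + 1, hkj =>
          simp only [peelAux]
          refine Sum.Lex.inl_lt_inl_iff.2 ?_
          rw [toDual_lt_toDual]
          exact Sigma.Lex.left _ _ (by omega)
      · match j, a, b, hba with
        | 0, a, b, hba =>
          simp only [peelAux]
          exact Sum.Lex.inr_lt_inr_iff.2 (Sum.Lex.inl_lt_inl_iff.2 (by
            rw [toDual_lt_toDual]; exact hba))
        | j + 1, a, b, hba =>
          simp only [peelAux]
          refine Sum.Lex.inl_lt_inl_iff.2 ?_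
          rw [toDual_lt_toDual]
          exact Sigma.Lex.right _ _ hba
    · rename_i b b'
      simp only [Sum.elim_inr, ofLex_toLex]
      exact Sum.Lex.inr_lt_inr_iff.2 (Sum.Lex.inr_lt_inr_iff.2 h)
    · obtain ⟨x, rfl⟩ := toDual.surjective xd
      obtain ⟨⟨j, a⟩, rfl⟩ := toLex.surjective x
      simp only [ofLex_toLex, Sum.elim_inl, Sum.elim_inr, ofDual_toDual]
      match j, a with
      | 0, a =>
        simp only [peelAux]
        exact Sum.Lex.inr_lt_inr_iff.2 (Sum.Lex.inl_lt_inr _ _)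
      | j + 1, a =>
        simp only [peelAux]
        exact Sum.Lex.inl_lt_inr _ _
  · rintro z
    obtain ⟨w | w, rfl⟩ := toLex.surjective z
    · obtain ⟨t, rfl⟩ := toDual.surjective w
      obtain ⟨⟨j, a⟩, rfl⟩ := toLex.surjective t
      exact ⟨toLex (Sum.inl (toDual (toLex ⟨j + 1, a⟩))), by simp [peelAux]⟩
    · obtain ⟨w | w, rfl⟩ := toLex.surjective w
      · obtain ⟨a, rfl⟩ := toDual.surjective w
        exact ⟨toLex (Sum.inl (toDual (toLex ⟨0, a⟩))), by simp [peelAux]⟩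
      · exact ⟨toLex (Sum.inr w), rfl⟩

end Structural

theorem hω : ω * ω ^ ω = ω ^ ω := by
  calc ω * ω ^ ω = ω ^ (1 : Ordinal) * ω ^ ω := by rw [opow_one]
    _ = ω ^ ((1 : Ordinal) + ω) := (opow_add _ _ _).symm
    _ = ω ^ ω := by rw [one_add_omega0]

theorem habs (m : ℕ) : ω * (m : Ordinal) + ω ^ ω = ω ^ ω := by
  apply Ordinal.add_absorp (b := ω) _ le_rfl
  calc ω * (m : Ordinal) < ω * ω :=
        (mul_lt_mul_iff_right₀ omega0_pos).2 (nat_lt_omega0 m)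
    _ ≤ ω * ω ^ ω := mul_le_mul_right (left_le_opow _ omega0_pos) ω
    _ = ω ^ ω := hω

theorem step_nonneg {i : ℤ} (hi : 0 ≤ i) (j : ℕ) :
    ω * (ω ^ (e i j) * (c i j)) = ω ^ (e (i+1) j) * (c (i+1) j) := by
  have he : e (i+1) j = e i j + 1 := by
    unfold e; rw [max_eq_left hi, max_eq_left (by omega : (0:ℤ) ≤ i+1)]; omega
  have hc : c (i+1) j = c i j := by
    unfold c
    rw [max_eq_right (by omega : -i ≤ 0), max_eq_right (by omega : -(i+1) ≤ 0)]
  rw [he, hc, pow_succ', mul_assoc]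

theorem step_neg {i : ℤ} (hi : i + 1 ≤ 0) (j : ℕ) :
    ω * (ω ^ (e i j) * (c i j)) = ω ^ (e (i+1) (j+1)) * (c (i+1) (j+1)) := by
  have he : e (i+1) (j+1) = e i j + 1 := by
    unfold e; rw [max_eq_right (by omega : i ≤ 0), max_eq_right hi]; omega
  have hc : c (i+1) (j+1) = c i j := by
    unfold c
    rw [max_eq_left (by omega : (0:ℤ) ≤ -i), max_eq_left (by omega : (0:ℤ) ≤ -(i+1))]
    omega
  rw [he, hc, pow_succ', mul_assoc]

theorem absorb_neg {i : ℤ} (hi : i + 1 ≤ 0) :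
    ω ^ (e (i+1) 0) * (c (i+1) 0) + ω ^ ω = ω ^ ω := by
  have he : e (i+1) 0 = 1 := by unfold e; rw [max_eq_right hi]; rfl
  rw [he, pow_one, habs]

end Helpers

/-- Replacing every point of `L i` by a copy of `ω` yields `L (i+1)`:
`L i ×ₗ ℕ ≅ L (i+1)`. -/
theorem L_mul_omega : ∀ i : ℤ, Nonempty (Lex (L i × ℕ) ≃o L (i + 1)) := by
  intro i
  have F1 := distribIso (A := (Lex (Σ j : ℕ, (Ordinal.ToType (ω ^ (e i j) * (c i j)))ᵒᵈ))ᵒᵈ)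
    (B := Ordinal.ToType (ω ^ ω)) (C := ℕ)
  have F2 := sigmaProdIso (C := ℕ) (Y := fun j => Ordinal.ToType (ω ^ (e i j) * (c i j)))
  have F4 : Lex (Ordinal.ToType (ω ^ ω) × ℕ) ≃o Ordinal.ToType (ω ^ ω) :=
    (prodNatIso _).trans (toTypeCongr hω)
  rcases le_or_gt 0 i with hi | hi
  · -- nonnegative case : term-by-term
    have F3 : ∀ j : ℕ, Lex (Ordinal.ToType (ω ^ (e i j) * (c i j)) × ℕ) ≃o
        Ordinal.ToType (ω ^ (e (i+1) j) * (c (i+1) j)) :=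
      fun j => (prodNatIso _).trans (toTypeCongr (step_nonneg hi j))
    exact ⟨F1.trans (sumCongr
      (F2.trans ((sigmaCongr (fun j => (F3 j).dual)).dual)) F4)⟩
  · -- negative case : shift and absorb
    have hi' : i + 1 ≤ 0 := by omega
    have F3 : ∀ j : ℕ, Lex (Ordinal.ToType (ω ^ (e i j) * (c i j)) × ℕ) ≃o
        Ordinal.ToType (ω ^ (e (i+1) (j+1)) * (c (i+1) (j+1))) :=
      fun j => (prodNatIso _).trans (toTypeCongr (step_neg hi' j))
    have H : Lex (L i × ℕ) ≃o
        ((Lex (Σ j : ℕ, (Ordinal.ToType (ω ^ (e (i+1) (j+1)) * (c (i+1) (j+1))))ᵒᵈ))ᵒᵈ ⊕ₗ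
          Ordinal.ToType (ω ^ ω)) :=
      F1.trans (sumCongr (F2.trans ((sigmaCongr (fun j => (F3 j).dual)).dual)) F4)
    have P := peelIso (X := fun j => (Ordinal.ToType (ω ^ (e (i+1) j) * (c (i+1) j)))ᵒᵈ)
      (B := Ordinal.ToType (ω ^ ω))
    have Q : (((Ordinal.ToType (ω ^ (e (i+1) 0) * (c (i+1) 0)))ᵒᵈ)ᵒᵈ ⊕ₗ
        Ordinal.ToType (ω ^ ω)) ≃o Ordinal.ToType (ω ^ ω) :=
      (sumCongr (OrderIso.dualDual _).symm (OrderIso.refl _)).trans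
        ((sumTypeIso _ _).trans (toTypeCongr (absorb_neg hi')))
    exact ⟨H.trans ((sumCongr (OrderIso.refl _) Q.symm).trans P.symm)⟩
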